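/- Let δ > 0 and m₂ > 0, and let T be an arbitrary map from the set of functions ℝ → ℝ to the set of functions ℝ → ℝ. Then there exists a differentiable function f : ℝ → ℝ with |f(x)| ≤ δ for all x (so the zero function is a δ-approximation of f in the sup norm), with f' Lipschitz continuous with constant m₂, such that sup_{x ∈ ℝ} |(T 0)(x) − f'(x)| ≥ √(2 δ m₂), where 0 denotes the identically zero function. -/

import Mathlib

open scoped ENNReal

lemma sq_max_hasDerivAt (y : ℝ) : HasDerivAt (fun y : ℝ => max y 0 ^ 2) (2 * max y 0) y := by
  rcases lt_trichotomy y 0 with h | h | h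
  · have hev : (fun y : ℝ => max y 0 ^ 2) =ᶠ[nhds y] fun _ => (0:ℝ) := by
      filter_upwards [eventually_lt_nhds h] with z hz
      simp [max_eq_right hz.le]
    have : HasDerivAt (fun _ : ℝ => (0:ℝ)) 0 y := hasDerivAt_const y 0
    simpa [max_eq_right h.le] using this.congr_of_eventuallyEq hev
  · subst h
    rw [hasDerivAt_iff_tendsto_slope]
    have hb : ∀ z : ℝ, z ≠ 0 → ‖slope (fun y : ℝ => max y 0 ^ 2) 0 z‖ ≤ |z| := by
      intro z hz
      have h1 : max z 0 ^ 2 ≤ z ^ 2 := by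
        rcases le_or_gt z 0 with h | h
        · simp [max_eq_right h, sq_nonneg]
        · simp [max_eq_left h.le]
      have hs : slope (fun y : ℝ => max y 0 ^ 2) 0 z = max z 0 ^ 2 / z := by
        simp [slope, div_eq_inv_mul]
      rw [hs, Real.norm_eq_abs, abs_div, div_le_iff₀ (abs_pos.2 hz)]
      calc |max z 0 ^ 2| = max z 0 ^ 2 := abs_of_nonneg (sq_nonneg _)
        _ ≤ z ^ 2 := h1
        _ = |z| * |z| := by rw [sq, ← abs_mul_abs_self]
    have htend : Filter.Tendsto (fun z : ℝ => |z|) (nhdsWithin 0 {(0:ℝ)}ᶜ) (nhds 0) := by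
      simpa using (continuous_abs.tendsto (0:ℝ)).mono_left nhdsWithin_le_nhds
    simpa using squeeze_zero_norm' (by filter_upwards [self_mem_nhdsWithin] with z hz using hb z hz) htend
  · have hev : (fun y : ℝ => max y 0 ^ 2) =ᶠ[nhds y] fun z => z ^ 2 := by
      filter_upwards [eventually_gt_nhds h] with z hz
      simp [max_eq_left hz.le]
    have := hasDerivAt_pow 2 y
    simpa [max_eq_left h.le, mul_comm] using this.congr_of_eventuallyEq hev

lemma Qcomp_hasDerivAt (m : ℝ) (hm : 0 < m) (A b : ℝ) (y : ℝ) :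
    HasDerivAt (fun y : ℝ => (max (A + b*y) 0)^2/(2*m)) (max (A + b*y) 0 * b / m) y := by
  have hu : HasDerivAt (fun y : ℝ => A + b*y) b y := by
    simpa using ((hasDerivAt_id y).const_mul b).const_add A
  have h1 := ((sq_max_hasDerivAt (A + b*y)).comp y hu).div_const (2*m)
  convert h1 using 1
  · rfl
  · rfl
  · rfl
  field_simp

noncomputable def lbBump (A m δ : ℝ) (x : ℝ) : ℝ :=
  if 0 ≤ x then (max (A + (-m)*x) 0)^2/(2*m) - δ else δ - (max (A + m*x) 0)^2/(2*m)

lemma lbBump_hasDerivAt (A m δ : ℝ) (hm : 0 < m) (hA : 0 < A) (hA2 : A^2 = 2*δ*m) (x : ℝ) :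
    HasDerivAt (lbBump A m δ) (-(max (A - m*|x|) 0)) x := by
  have hbp : ∀ y : ℝ, HasDerivAt (fun y : ℝ => (max (A + (-m)*y) 0)^2/(2*m) - δ)
      (-(max (A + (-m)*y) 0)) y := by
    intro y
    have := (Qcomp_hasDerivAt m hm A (-m) y).sub_const δ
    convert this using 1
    · rfl
    · rfl
    field_simp
  have hbm : ∀ y : ℝ, HasDerivAt (fun y : ℝ => δ - (max (A + m*y) 0)^2/(2*m))
      (-(max (A + m*y) 0)) y := by
    intro y
    have := (Qcomp_hasDerivAt m hm A m y).const_sub δ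
    convert this using 1
    · rfl
    · rfl
    field_simp
  rcases lt_trichotomy x 0 with hx | hx | hx
  · have hev : lbBump A m δ =ᶠ[nhds x] (fun y : ℝ => δ - (max (A + m*y) 0)^2/(2*m)) := by
      filter_upwards [eventually_lt_nhds hx] with z hz
      simp [lbBump, not_le.2 hz]
    have := (hbm x).congr_of_eventuallyEq hev
    have habs : A - m * |x| = A + m * x := by rw [abs_of_neg hx]; ring
    rwa [habs]
  · subst hx
    have hz1 : (max A 0)^2/(2*m) = δ := by
      rw [max_eq_left hA.le, hA2]
      field_simp
    have hb0 : lbBump A m δ 0 = 0 := by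
      simp only [lbBump, le_refl, if_pos, mul_zero, neg_mul, neg_zero, add_zero]
      rw [hz1]
      ring
    have h1 : HasDerivWithinAt (lbBump A m δ) (-(max A 0)) (Set.Ici 0) 0 := by
      refine ((hbp 0).hasDerivWithinAt.congr (fun y hy => ?_) ?_).congr_deriv ?_
      · have hy' : (0:ℝ) ≤ y := hy
        simp [lbBump, hy']
      · rw [hb0]
        simp only [mul_zero, neg_mul, neg_zero, add_zero]
        rw [hz1]
        ring
      · norm_num
    have h2 : HasDerivWithinAt (lbBump A m δ) (-(max A 0)) (Set.Iic 0) 0 := by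
      refine ((hbm 0).hasDerivWithinAt.congr (fun y hy => ?_) ?_).congr_deriv ?_
      · rcases eq_or_lt_of_le (Set.mem_Iic.mp hy) with h | h
        · subst h
          rw [hb0]
          simp only [mul_zero, add_zero]
          rw [hz1]
          ring
        · simp [lbBump, not_le.2 h]
      · rw [hb0]
        simp only [mul_zero, add_zero]
        rw [hz1]
        ring
      · norm_num
    have := h2.union h1
    rw [Set.Iic_union_Ici] at this
    rw [hasDerivWithinAt_univ] at this
    simpa using this
  · have hev : lbBump A m δ =ᶠ[nhds x] (fun y : ℝ => (max (A + (-m)*y) 0)^2/(2*m) - δ) := by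
      filter_upwards [eventually_gt_nhds hx] with z hz
      simp [lbBump, hz.le]
    have := (hbp x).congr_of_eventuallyEq hev
    have habs : A - m * |x| = A + (-m) * x := by rw [abs_of_pos hx]; ring
    rwa [habs]

lemma lbBump_abs_le (A m δ : ℝ) (hm : 0 < m) (hδ : 0 < δ) (hA : 0 < A) (hA2 : A^2 = 2*δ*m)
    (x : ℝ) : |lbBump A m δ x| ≤ δ := by
  have key : ∀ u : ℝ, u ≤ A → 0 ≤ (max u 0)^2/(2*m) ∧ (max u 0)^2/(2*m) ≤ δ := by
    intro u hu
    have h0 : (0:ℝ) ≤ max u 0 := le_max_right _ _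
    have h1 : max u 0 ≤ A := max_le hu hA.le
    have h2 : (max u 0)^2 ≤ A^2 := by nlinarith
    constructor
    · positivity
    · rw [div_le_iff₀ (by linarith)]
      nlinarith
  rcases le_or_gt 0 x with hx | hx
  · have := key (A + -(m*x)) (by nlinarith)
    rw [abs_le]
    constructor <;> simp [lbBump, hx] <;> linarith [this.1, this.2]
  · have := key (A + m*x) (by nlinarith)
    rw [abs_le]
    constructor <;> simp [lbBump, not_le.2 hx] <;> linarith [this.1, this.2]


/-- for any reconstruction map `T`, there is a function `f` with
`|f| ≤ δ` (so `0` is admissible noisy data for `f`) and `f'` Lipschitz with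
constant `m₂`, such that the worst-case error of `T` on the zero data is at
least `√(2δm₂)`. -/
theorem lower_bound_any_method_j_two
    (δ m₂ : ℝ) (hδ : 0 < δ) (hm₂ : 0 < m₂)
    (T : (ℝ → ℝ) → (ℝ → ℝ)) :
    ∃ f : ℝ → ℝ, Differentiable ℝ f ∧
      (∀ x : ℝ, |f x| ≤ δ) ∧
      (∀ s t : ℝ, |deriv f s - deriv f t| ≤ m₂ * |s - t|) ∧
      ENNReal.ofReal (Real.sqrt (2 * δ * m₂)) ≤
        ⨆ x : ℝ, ENNReal.ofReal |T (fun _ => 0) x - deriv f x| := by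
  set A := Real.sqrt (2 * δ * m₂) with hAdef
  have hApos : 0 < A := Real.sqrt_pos.2 (by positivity)
  have hA2 : A ^ 2 = 2 * δ * m₂ := Real.sq_sqrt (by positivity)
  set f := lbBump A m₂ δ with hfdef
  have hfd := lbBump_hasDerivAt A m₂ δ hm₂ hApos hA2
  have hderiv : ∀ x, deriv f x = -(max (A - m₂*|x|) 0) := fun x => (hfd x).deriv
  have hdiff : Differentiable ℝ f := fun x => (hfd x).differentiableAt
  have habs := lbBump_abs_le A m₂ δ hm₂ hδ hApos hA2
  have hlip : ∀ s t : ℝ, |deriv f s - deriv f t| ≤ m₂ * |s - t| := by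
    intro s t
    rw [hderiv, hderiv]
    calc |-(max (A - m₂*|s|) 0) - -(max (A - m₂*|t|) 0)|
        = |max (A - m₂*|t|) 0 - max (A - m₂*|s|) 0| := by rw [neg_sub_neg]
      _ ≤ |(A - m₂*|t|) - (A - m₂*|s|)| := abs_max_sub_max_le_abs _ _ _
      _ = m₂ * |(|s| - |t|)| := by
          rw [show (A - m₂*|t|) - (A - m₂*|s|) = m₂ * (|s| - |t|) by ring,
            abs_mul, abs_of_pos hm₂]
      _ ≤ m₂ * |s - t| :=
          mul_le_mul_of_nonneg_left (abs_abs_sub_abs_le_abs_sub s t) hm₂.le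
  have hA0 : deriv f 0 = -A := by
    rw [hderiv]
    simp [max_eq_left hApos.le]
  rcases le_or_gt 0 (T (fun _ => 0) 0) with hz | hz
  · refine ⟨f, hdiff, habs, hlip, ?_⟩
    have hle : A ≤ |T (fun _ => 0) 0 - deriv f 0| := by
      rw [hA0, sub_neg_eq_add, abs_of_nonneg (by linarith)]
      linarith
    calc ENNReal.ofReal A ≤ ENNReal.ofReal |T (fun _ => 0) 0 - deriv f 0| :=
          ENNReal.ofReal_le_ofReal hle
      _ ≤ ⨆ x : ℝ, ENNReal.ofReal |T (fun _ => 0) x - deriv f x| :=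
          le_iSup (fun x => ENNReal.ofReal |T (fun _ => 0) x - deriv f x|) 0
  · have hd : ∀ x, deriv (-f) x = -deriv f x := by
      intro x
      exact deriv.neg
    refine ⟨-f, hdiff.neg, ?_, ?_, ?_⟩
    · intro x
      rw [Pi.neg_apply, abs_neg]
      exact habs x
    · intro s t
      rw [hd, hd, show -deriv f s - -deriv f t = -(deriv f s - deriv f t) by ring, abs_neg]
      exact hlip s t
    · have hle : A ≤ |T (fun _ => 0) 0 - deriv (-f) 0| := by
        rw [hd, hA0, neg_neg, abs_of_nonpos (by linarith)]
        linarith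
      calc ENNReal.ofReal A ≤ ENNReal.ofReal |T (fun _ => 0) 0 - deriv (-f) 0| :=
            ENNReal.ofReal_le_ofReal hle
        _ ≤ ⨆ x : ℝ, ENNReal.ofReal |T (fun _ => 0) x - deriv (-f) x| :=
            le_iSup (fun x => ENNReal.ofReal |T (fun _ => 0) x - deriv (-f) x|) 0
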